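/- For every homeomorphism η : [0,∞) → [0,∞), every D ≥ 1, and all reals d_X, d_Y > 0 there exist exponents Λ ≥ λ > 0 and constants C ≥ c > 0 with the following property: whenever (X,d) and (Y,ρ) are nonempty bounded metric spaces that are uniformly perfect with constant D and satisfy diam(X) = d_X and diam(Y) = d_Y, and f : X → Y is an η-quasisymmetric homeomorphism, then c·d(x,y)^Λ ≤ ρ(f(x),f(y)) ≤ C·d(x,y)^λ for all x,y ∈ X. -/

import Mathlib

open Set Metric Filter Topology

noncomputable section

/-- `η : [0,∞) → [0,∞)` is a homeomorphism (expressed for a function `η : ℝ → ℝ`). -/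
def IsHomeoOfIci (η : ℝ → ℝ) : Prop :=
  ∃ e : (Set.Ici (0:ℝ)) ≃ₜ (Set.Ici (0:ℝ)), ∀ x : Set.Ici (0:ℝ), (e x : ℝ) = η x

/-- `f` is η-quasisymmetric. -/
def IsQuasisymmetric {X Y : Type*} [MetricSpace X] [MetricSpace Y] (η : ℝ → ℝ)
    (f : X → Y) : Prop :=
  ∀ x y z : X, x ≠ z →
    dist (f x) (f y) / dist (f x) (f z) ≤ η (dist x y / dist x z)

/-- A metric space is uniformly perfect with constant `D ≥ 1` if
`B(x,r) \ B(x,r/D) ≠ ∅` whenever `X \ B(x,r) ≠ ∅` (closed balls). -/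
def UniformlyPerfect (X : Type*) [MetricSpace X] (D : ℝ) : Prop :=
  ∀ (x : X) (r : ℝ), 0 < r → ((Set.univ : Set X) \ closedBall x r).Nonempty →
    (closedBall x r \ closedBall x (r / D)).Nonempty

lemma eta_props (η : ℝ → ℝ) (hη : IsHomeoOfIci η) :
    ∃ ηi : ℝ → ℝ,
      StrictMonoOn η (Ici 0) ∧ η 0 = 0 ∧ (∀ t, 0 ≤ t → 0 ≤ η t) ∧
      (∀ t, 0 ≤ t → ηi (η t) = t) ∧ (∀ s, 0 ≤ s → η (ηi s) = s) ∧
      (∀ s, 0 ≤ s → 0 ≤ ηi s) ∧ MonotoneOn ηi (Ici 0) := by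
  obtain ⟨e, he⟩ := hη
  -- basic facts
  have hnonneg : ∀ t, 0 ≤ t → 0 ≤ η t := by
    intro t ht
    have := (e ⟨t, ht⟩).2
    rwa [he ⟨t, ht⟩] at this
  have hcont : ContinuousOn η (Ici (0:ℝ)) := by
    rw [continuousOn_iff_continuous_restrict]
    have : (Ici (0:ℝ)).restrict η = fun p => ((e p : ℝ)) := by
      funext p; exact (he p).symm
    rw [show (Ici (0:ℝ)).domRestrict η = (Ici (0:ℝ)).restrict η from rfl, this]
    exact continuous_subtype_val.comp e.continuous
  have hinj : InjOn η (Ici (0:ℝ)) := by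
    intro a ha b hb hab
    have h1 : e ⟨a, ha⟩ = e ⟨b, hb⟩ := by
      apply Subtype.ext
      rw [he ⟨a, ha⟩, he ⟨b, hb⟩]; exact hab
    have := e.injective h1
    exact congrArg Subtype.val this
  have hsurj : ∀ s, 0 ≤ s → ∃ t, 0 ≤ t ∧ η t = s := by
    intro s hs
    refine ⟨(e.symm ⟨s, hs⟩ : ℝ), (e.symm ⟨s, hs⟩).2, ?_⟩
    have := he (e.symm ⟨s, hs⟩)
    rw [e.apply_symm_apply] at this
    exact this.symm
  -- strict monotonicity on every Icc 0 M with M > 0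
  have hmonoIcc : ∀ M : ℝ, 0 < M → StrictMonoOn η (Icc 0 M) := by
    intro M hM
    rcases ContinuousOn.strictMonoOn_of_injOn_Icc' hM.le
      (hcont.mono (Icc_subset_Ici_self)) (hinj.mono (Icc_subset_Ici_self)) with h | h
    · exact h
    · exfalso
      obtain ⟨s, hs0, hs⟩ := hsurj (η 0 + 1) (by have := hnonneg 0 le_rfl; linarith)
      have hspos : 0 < s := by
        rcases eq_or_lt_of_le hs0 with h' | h'
        · exfalso; rw [← h'] at hs; linarith
        · exact h'
      set M' := max M s with hM'
      rcases ContinuousOn.strictMonoOn_of_injOn_Icc' (le_max_left M s |>.trans' hM.le : (0:ℝ) ≤ M')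
        (hcont.mono (Icc_subset_Ici_self)) (hinj.mono (Icc_subset_Ici_self)) with h' | h'
      · have h1 : η M < η 0 := h ⟨le_rfl, hM.le⟩ ⟨hM.le, le_rfl⟩ hM
        have h2 : η 0 < η M := h' ⟨le_rfl, le_trans hM.le (le_max_left M s)⟩
          ⟨hM.le, le_max_left M s⟩ hM
        linarith
      · have h1 : η s < η 0 := h' ⟨le_rfl, le_trans hspos.le (le_max_right M s)⟩
          ⟨hs0, le_max_right M s⟩ hspos
        rw [hs] at h1; linarith
  have hmono : StrictMonoOn η (Ici 0) := by
    intro a ha b hb hab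
    have hb' : 0 < b := lt_of_le_of_lt ha hab
    exact hmonoIcc b hb' ⟨ha, hab.le⟩ ⟨hb, le_rfl⟩ hab
  have h0 : η 0 = 0 := by
    obtain ⟨t, ht, hts⟩ := hsurj 0 le_rfl
    have h1 : η 0 ≤ η t := hmono.monotoneOn (mem_Ici.mpr le_rfl) ht ht
    have h2 := hnonneg 0 le_rfl
    rw [hts] at h1; linarith
  -- inverse
  set ηi : ℝ → ℝ := fun s => ((e.symm ⟨max s 0, mem_Ici.mpr (le_max_right _ _)⟩ : Ici (0:ℝ)) : ℝ) with hηi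
  have hinv_nonneg : ∀ s, 0 ≤ s → 0 ≤ ηi s := fun s _ => (e.symm _).2
  have hright : ∀ s, 0 ≤ s → η (ηi s) = s := by
    intro s hs
    have hmax : max s 0 = s := max_eq_left hs
    have := he (e.symm ⟨max s 0, mem_Ici.mpr (le_max_right _ _)⟩)
    rw [e.apply_symm_apply] at this
    exact this.symm.trans hmax
  have hleft : ∀ t, 0 ≤ t → ηi (η t) = t := by
    intro t ht
    apply hinj (hinv_nonneg _ (hnonneg t ht)) ht
    exact hright _ (hnonneg t ht)
  have hinvmono : MonotoneOn ηi (Ici 0) := by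
    intro a ha b hb hab
    by_contra hlt
    push_neg at hlt
    have := hmono (hinv_nonneg b hb) (hinv_nonneg a ha) hlt
    rw [hright a ha, hright b hb] at this
    linarith
  exact ⟨ηi, hmono, h0, hnonneg, hleft, hright, hinv_nonneg, hinvmono⟩


universe u v

set_option maxHeartbeats 1000000 in

lemma lemA (θ : ℝ → ℝ) (hmono : MonotoneOn θ (Ici 0))
    (m : ℕ) (hm1 : 1 ≤ m) (hm : θ ((1/2 : ℝ)^m) ≤ 1/2)
    (D dX dY : ℝ) (hD : 1 ≤ D) (hdX : 0 < dX) (hdY : 0 < dY) :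
    ∃ lam C : ℝ, 0 < lam ∧ lam ≤ 1 ∧ 0 < C ∧
      ∀ (X : Type u) (Y : Type v) [MetricSpace X] [MetricSpace Y],
        Bornology.IsBounded (Set.univ : Set Y) →
        UniformlyPerfect X D →
        Metric.diam (Set.univ : Set X) = dX → Metric.diam (Set.univ : Set Y) = dY →
        ∀ f : X → Y, Function.Injective f →
        (∀ x y z : X, x ≠ z → dist (f x) (f y) / dist (f x) (f z) ≤ θ (dist x y / dist x z)) →
        ∀ x y : X, dist (f x) (f y) ≤ C * dist x y ^ lam := by
  have hD0 : (0:ℝ) < D := lt_of_lt_of_le one_pos hD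
  have hB1 : (1:ℝ) < 2 * D := by nlinarith
  have hB0 : (0:ℝ) < 2 * D := by linarith
  have hlogB : 0 < Real.log (2 * D) := Real.log_pos hB1
  have hm0 : (0:ℝ) < (m:ℝ) := by exact_mod_cast hm1
  set lam := Real.log 2 / ((m:ℝ) * Real.log (2 * D)) with hlam_def
  have hlam : 0 < lam := div_pos (Real.log_pos one_lt_two) (by positivity)
  have hlam1 : lam ≤ 1 := by
    rw [hlam_def, div_le_one (by positivity)]
    have h1 : Real.log 2 ≤ Real.log (2 * D) := Real.log_le_log (by norm_num) (by nlinarith)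
    have hm1' : (1:ℝ) ≤ (m:ℝ) := by exact_mod_cast hm1
    nlinarith [mul_le_mul_of_nonneg_right hm1' hlogB.le]
  set K := max (θ 1) 1 with hK_def
  have hK1 : (1:ℝ) ≤ K := le_max_right _ _
  have hK0 : (0:ℝ) < K := lt_of_lt_of_le one_pos hK1
  set C := 2 * K ^ 2 * dY * (4 / dX) ^ lam with hC_def
  have hC : 0 < C := by
    have := Real.rpow_pos_of_pos (show (0:ℝ) < 4 / dX by positivity) lam
    positivity
  refine ⟨lam, C, hlam, hlam1, hC, ?_⟩
  intro X Y _ _ hbY hup hdiamX hdiamY f hinj hqs x y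
  have hdistY : ∀ u v : Y, dist u v ≤ dY := fun u v =>
    hdiamY ▸ Metric.dist_le_diam_of_mem hbY (mem_univ u) (mem_univ v)
  rcases eq_or_lt_of_le (dist_nonneg : (0:ℝ) ≤ dist x y) with h0 | ht
  · have hxy : x = y := by rwa [eq_comm, dist_eq_zero] at h0
    subst hxy
    simp [← h0, Real.zero_rpow hlam.ne']
  set t := dist x y with ht_def
  -- a point far from x
  have hfar : ∃ u : X, dX / 4 ≤ dist x u := by
    by_contra h
    push_neg at h
    have hle : Metric.diam (univ : Set X) ≤ dX / 2 := by
      apply Metric.diam_le_of_forall_dist_le (by linarith)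
      intro a _ b _
      have h1 := h a
      have h2 := h b
      calc dist a b ≤ dist a x + dist x b := dist_triangle a x b
        _ ≤ dX / 4 + dX / 4 := by rw [dist_comm a x]; linarith
        _ = dX / 2 := by ring
    rw [hdiamX] at hle; linarith
  obtain ⟨u, hu⟩ := hfar
  have hu0 : 0 < dist x u := lt_of_lt_of_le (by linarith) hu
  -- one step of the chain
  have hstep : ∀ p : X, 0 < dist x p →
      ∃ w : X, 0 < dist x w ∧ dist x w ≤ dist x p / 2 ∧ dist x p / (2 * D) < dist x w := by
    intro p hp
    have hr : 0 < dist x p / 2 := by linarith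
    have hne : ((univ : Set X) \ closedBall x (dist x p / 2)).Nonempty := by
      refine ⟨p, mem_univ p, ?_⟩
      rw [mem_closedBall, dist_comm]
      linarith
    obtain ⟨w, hw1, hw2⟩ := hup x _ hr hne
    rw [mem_closedBall] at hw1
    rw [mem_closedBall] at hw2
    push_neg at hw2
    have heq : dist x p / 2 / D = dist x p / (2 * D) := by
      rw [div_div]
    rw [heq] at hw2
    have hwpos : 0 < dist x p / (2 * D) := by positivity
    rw [dist_comm w x] at hw1 hw2
    exact ⟨w, hwpos.trans hw2, hw1, hw2⟩
  choose g hg1 hg2 hg3 using hstep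
  set step : {p : X // 0 < dist x p} → {p : X // 0 < dist x p} :=
    fun p => ⟨g p.1 p.2, hg1 p.1 p.2⟩ with hstep_def
  set zz : ℕ → {p : X // 0 < dist x p} := fun k => step^[k] ⟨u, hu0⟩ with hzz_def
  set s : ℕ → ℝ := fun k => dist x (zz k : X) with hs_def
  have hzsucc : ∀ k, zz (k + 1) = step (zz k) := fun k =>
    Function.iterate_succ_apply' step k _
  have hs_pos : ∀ k, 0 < s k := fun k => (zz k).2
  have hs_succ : ∀ k, s (k+1) = dist x (g (zz k).1 (zz k).2) := by
    intro k
    show dist x ((zz (k+1) : X)) = _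
    rw [hzsucc k]
  have hs_half : ∀ k, s (k + 1) ≤ s k / 2 := by
    intro k
    rw [hs_succ k]
    exact hg2 _ _
  have hs_low : ∀ k, s k / (2 * D) < s (k + 1) := by
    intro k
    rw [hs_succ k]
    exact hg3 _ _
  have hs0 : dX / 4 ≤ s 0 := hu
  have hs_mono : ∀ k i, s (k + i) ≤ s k * (1/2) ^ i := by
    intro k i
    induction i with
    | zero => simp
    | succ i ih =>
      have h1 := hs_half (k + i)
      have h2 : s (k + (i+1)) = s (k + i + 1) := by ring_nf
      rw [h2]
      calc s (k + i + 1) ≤ s (k + i) / 2 := h1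
        _ ≤ s k * (1/2)^i / 2 := by linarith
        _ = s k * (1/2)^(i+1) := by rw [pow_succ]; ring
  have hs_le : ∀ k i, k ≤ i → s i ≤ s k := by
    intro k i hki
    obtain ⟨j, rfl⟩ := Nat.exists_eq_add_of_le hki
    calc s (k + j) ≤ s k * (1/2)^j := hs_mono k j
      _ ≤ s k * 1 := by
          apply mul_le_mul_of_nonneg_left _ (hs_pos k).le
          apply pow_le_one₀ <;> norm_num
      _ = s k := mul_one _
  have hs_geo : ∀ k, s 0 * (1/(2*D)) ^ k ≤ s k := by
    intro k
    induction k with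
    | zero => simp
    | succ k ih =>
      have h1 := hs_low k
      have h2 : (0:ℝ) < (1/(2*D))^k := by positivity
      calc s 0 * (1/(2*D))^(k+1) = (s 0 * (1/(2*D))^k) / (2*D) := by
            rw [pow_succ]; field_simp
        _ ≤ s k / (2*D) := by gcongr
        _ ≤ s (k+1) := h1.le
  -- positivity of image distances
  have hne_x : ∀ k, x ≠ (zz k : X) := fun k => dist_pos.mp (hs_pos k)
  have hfz_pos : ∀ k, 0 < dist (f x) (f (zz k)) :=
    fun k => dist_pos.mpr (fun h => (hne_x k) (hinj h))
  -- decay by one block of m steps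
  have hdecay1 : ∀ k, dist (f x) (f (zz (k + m))) ≤ (1/2) * dist (f x) (f (zz k)) := by
    intro k
    have h1 := hqs x (zz (k + m)) (zz k) (hne_x k)
    have hratio : s (k + m) / s k ≤ (1/2) ^ m := by
      rw [div_le_iff₀ (hs_pos k)]
      have := hs_mono k m
      linarith [this, mul_comm ((1:ℝ)/2 ^ m) (s k)]
    have h2 : θ (s (k + m) / s k) ≤ θ ((1/2 : ℝ) ^ m) := by
      apply hmono _ _ hratio
      · exact div_nonneg (hs_pos (k+m)).le (hs_pos k).le
      · exact mem_Ici.mpr (by positivity)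
    have h3 : dist (f x) (f (zz (k + m))) / dist (f x) (f (zz k)) ≤ 1/2 :=
      le_trans h1 (le_trans h2 hm)
    rw [div_le_iff₀ (hfz_pos k)] at h3
    linarith
  -- decay along multiples of m
  have hdecay : ∀ j, dist (f x) (f (zz (j * m))) ≤ (1/2 : ℝ) ^ j * dY := by
    intro j
    induction j with
    | zero => simpa using hdistY (f x) (f (zz 0))
    | succ j ih =>
      have h1 : (j+1) * m = j * m + m := by ring
      rw [h1]
      calc dist (f x) (f (zz (j * m + m))) ≤ (1/2) * dist (f x) (f (zz (j * m))) :=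
            hdecay1 (j * m)
        _ ≤ (1/2) * ((1/2)^j * dY) := by linarith
        _ = (1/2)^(j+1) * dY := by rw [pow_succ]; ring
  -- comparison between chain points
  have hcomp : ∀ a b : ℕ, b ≤ a → dist (f x) (f (zz a)) ≤ K * dist (f x) (f (zz b)) := by
    intro a b hba
    have h1 := hqs x (zz a) (zz b) (hne_x b)
    have hr : s a / s b ≤ 1 := (div_le_one (hs_pos b)).mpr (hs_le b a hba)
    have h2 : θ (s a / s b) ≤ K := by
      refine le_trans (hmono ?_ ?_ hr) (le_max_left _ _)
      · exact div_nonneg (hs_pos a).le (hs_pos b).le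
      · exact mem_Ici.mpr zero_le_one
    have h3 := le_trans h1 h2
    rw [div_le_iff₀ (hfz_pos b)] at h3
    exact h3
  by_cases hcase : s 0 ≤ t
  · -- large distance case
    have h1 : dist (f x) (f y) ≤ dY := hdistY _ _
    have hbase : (1:ℝ) ≤ 4 / dX * t := by
      have h' : dX / 4 ≤ t := le_trans hs0 hcase
      have h'' : 4/dX * (dX/4) ≤ 4/dX * t :=
        mul_le_mul_of_nonneg_left h' (by positivity)
      have h''' : 4/dX * (dX/4) = 1 := by field_simp
      linarith
    have h2 : (1:ℝ) ≤ (4 / dX * t) ^ lam := by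
      calc (1:ℝ) = (1:ℝ) ^ lam := (Real.one_rpow lam).symm
        _ ≤ (4 / dX * t) ^ lam := Real.rpow_le_rpow zero_le_one hbase hlam.le
    rw [Real.mul_rpow (by positivity) ht.le] at h2
    have hK2 : (1:ℝ) ≤ K ^ 2 := one_le_pow₀ hK1
    have htl : (0:ℝ) ≤ t ^ lam := Real.rpow_nonneg ht.le lam
    have h4l : (0:ℝ) ≤ (4/dX) ^ lam := Real.rpow_nonneg (by positivity) lam
    have hKP : (1:ℝ) ≤ K^2 * ((4/dX)^lam * t^lam) := by
      have h5 := mul_le_mul hK2 h2 zero_le_one (by positivity : (0:ℝ) ≤ K^2)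
      linarith [h5, one_mul (1:ℝ)]
    calc dist (f x) (f y) ≤ dY := h1
      _ ≤ 2 * K^2 * dY * ((4/dX)^lam * t^lam) := by
          have h5 : dY * 1 ≤ dY * (K^2 * ((4/dX)^lam * t^lam)) :=
            mul_le_mul_of_nonneg_left hKP hdY.le
          have h6 : 2*K^2*dY*((4/dX)^lam*t^lam) = 2*(dY*(K^2*((4/dX)^lam * t^lam))) := by ring
          linarith
      _ = C * t ^ lam := by rw [hC_def]; ring
  · push_neg at hcase
    have hex : ∃ k, s k < t := by
      obtain ⟨k, hk⟩ := exists_pow_lt_of_lt_one (div_pos ht (hs_pos 0))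
        (by norm_num : (1/2 : ℝ) < 1)
      refine ⟨k, ?_⟩
      have h1 : s k ≤ s 0 * (1/2)^k := by simpa using hs_mono 0 k
      have h2 : s 0 * (1/2)^k < s 0 * (t / s 0) :=
        mul_lt_mul_of_pos_left hk (hs_pos 0)
      have h3 : s 0 * (t / s 0) = t := by
        rw [mul_comm]; exact div_mul_cancel₀ t (hs_pos 0).ne'
      linarith
    have hn'pos : Nat.find hex ≠ 0 := by
      intro h
      have := Nat.find_spec hex
      rw [h] at this
      linarith
    obtain ⟨n, hn⟩ := Nat.exists_eq_succ_of_ne_zero hn'pos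
    have hsn1 : s (n+1) < t := by
      have := Nat.find_spec hex
      rwa [hn] at this
    have hn_le : t ≤ s n := by
      have := Nat.find_min hex (show n < Nat.find hex by rw [hn]; exact Nat.lt_succ_self n)
      linarith [not_lt.mp this]
    -- first comparison: y against zz n
    have hstep1 : dist (f x) (f y) ≤ K * dist (f x) (f (zz n)) := by
      have h1 := hqs x y (zz n) (hne_x n)
      have hr : t / s n ≤ 1 := (div_le_one (hs_pos n)).mpr hn_le
      have h2 : θ (t / s n) ≤ K := by
        refine le_trans (hmono ?_ ?_ hr) (le_max_left _ _)
        · exact div_nonneg ht.le (hs_pos n).le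
        · exact mem_Ici.mpr zero_le_one
      have h3 := le_trans h1 h2
      rw [div_le_iff₀ (hfz_pos n)] at h3
      exact h3
    set q := n / m with hq_def
    have hstep2 : dist (f x) (f (zz n)) ≤ K * dist (f x) (f (zz (q * m))) :=
      hcomp n (q * m) (Nat.div_mul_le_self n m)
    have hstep3 : dist (f x) (f (zz (q * m))) ≤ (1/2 : ℝ) ^ q * dY := hdecay q
    -- exponent arithmetic
    have hmpos : 0 < m := hm1
    have hq : ((n:ℝ) + 1) / m - 1 ≤ (q:ℝ) := by
      have h1 : n % m < m := Nat.mod_lt _ hmpos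
      have h2 : m * q + n % m = n := Nat.div_add_mod n m
      have hnat : n + 1 ≤ (q + 1) * m := by
        calc n + 1 = m * q + n % m + 1 := by rw [h2]
          _ ≤ m * q + m := by omega
          _ = (q + 1) * m := by ring
      have hnat' : ((n:ℝ) + 1) ≤ ((q:ℝ) + 1) * (m:ℝ) := by exact_mod_cast hnat
      rw [sub_le_iff_le_add, div_le_iff₀ hm0]
      linarith
    have hhalf_rpow : ((1:ℝ)/2) ^ (q:ℝ) ≤ ((1:ℝ)/2) ^ (((n:ℝ)+1)/m - 1) :=
      Real.rpow_le_rpow_of_exponent_ge (by norm_num) (by norm_num) hq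
    have hsplit : ((1:ℝ)/2) ^ (((n:ℝ)+1)/m - 1) = 2 * ((1:ℝ)/2) ^ (((n:ℝ)+1)/m) := by
      rw [Real.rpow_sub (by norm_num : (0:ℝ) < 1/2), Real.rpow_one]
      ring
    have hkey : ((1:ℝ)/2) ^ (((n:ℝ)+1)/m) ≤ (4/dX * t) ^ lam := by
      have h1 : s 0 * (1/(2*D))^(n+1) ≤ s (n+1) := hs_geo (n+1)
      have hp : (0:ℝ) < (1/(2*D))^(n+1) := by positivity
      have h2 : dX/4 * (1/(2*D))^(n+1) < t := by nlinarith
      have h3 : ((1:ℝ)/(2*D))^(n+1) ≤ 4/dX * t := by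
        rw [← sub_nonneg]
        have h4 : 4/dX * (dX/4 * (1/(2*D))^(n+1)) = (1/(2*D))^(n+1) := by field_simp
        nlinarith [mul_lt_mul_of_pos_left h2 (show (0:ℝ) < 4/dX by positivity)]
      have h4 : ((1:ℝ)/2) ^ (((n:ℝ)+1)/m) = (((1:ℝ)/(2*D))^(n+1)) ^ lam := by
        rw [← Real.rpow_natCast ((1:ℝ)/(2*D)) (n+1), ← Real.rpow_mul (by positivity)]
        rw [Real.rpow_def_of_pos (by norm_num : (0:ℝ) < 1/2),
            Real.rpow_def_of_pos (by positivity : (0:ℝ) < 1/(2*D))]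
        congr 1
        have hlog2 : Real.log (1/2 : ℝ) = -Real.log 2 := by rw [one_div, Real.log_inv]
        have hlogBD : Real.log (1/(2*D) : ℝ) = -Real.log (2*D) := by rw [one_div, Real.log_inv]
        rw [hlog2, hlogBD, hlam_def]
        push_cast
        field_simp
      rw [h4]
      exact Real.rpow_le_rpow hp.le h3 hlam.le
    -- combine
    have hfd : (0:ℝ) ≤ dist (f x) (f (zz (q*m))) := dist_nonneg
    have hfd2 : (0:ℝ) ≤ dist (f x) (f (zz n)) := dist_nonneg
    have hq2 : ((1:ℝ)/2) ^ q = ((1:ℝ)/2) ^ (q:ℝ) := (Real.rpow_natCast _ q).symm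
    have hfinal : dist (f x) (f y) ≤ K^2 * dY * ((1/2:ℝ) ^ (q:ℝ)) := by
      rw [← hq2]
      calc dist (f x) (f y) ≤ K * dist (f x) (f (zz n)) := hstep1
        _ ≤ K * (K * dist (f x) (f (zz (q * m)))) := by nlinarith
        _ ≤ K * (K * ((1/2:ℝ)^q * dY)) := by nlinarith
        _ = K^2 * dY * ((1/2:ℝ)^q) := by ring
    have hmul : (4/dX * t) ^ lam = (4/dX)^lam * t^lam :=
      Real.mul_rpow (by positivity) ht.le
    calc dist (f x) (f y) ≤ K^2 * dY * ((1/2:ℝ) ^ (q:ℝ)) := hfinal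
      _ ≤ K^2 * dY * (2 * (4/dX * t)^lam) := by
          apply mul_le_mul_of_nonneg_left _ (by positivity)
          calc ((1:ℝ)/2) ^ (q:ℝ) ≤ ((1:ℝ)/2) ^ (((n:ℝ)+1)/m - 1) := hhalf_rpow
            _ = 2 * ((1:ℝ)/2) ^ (((n:ℝ)+1)/m) := hsplit
            _ ≤ 2 * (4/dX * t)^lam := by linarith
      _ = C * t ^ lam := by rw [hC_def, hmul]; ring


/-- Quasisymmetric homeomorphisms between uniformly perfect bounded metric spaces are
Hölder in both directions, with exponents and constants depending only on `η`, the
diameters of the spaces, and the uniform perfectness constant. -/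
theorem statement2 (η : ℝ → ℝ) (hη : IsHomeoOfIci η) (D : ℝ) (hD : 1 ≤ D)
    (dX dY : ℝ) (hdX : 0 < dX) (hdY : 0 < dY) :
    ∃ Λ lam C c : ℝ, 0 < lam ∧ lam ≤ Λ ∧ 0 < c ∧ c ≤ C ∧
      ∀ (X : Type u) (Y : Type v) [MetricSpace X] [MetricSpace Y],
        Nonempty X → Nonempty Y →
        Bornology.IsBounded (Set.univ : Set X) → Bornology.IsBounded (Set.univ : Set Y) →
        UniformlyPerfect X D → UniformlyPerfect Y D →
        Metric.diam (Set.univ : Set X) = dX → Metric.diam (Set.univ : Set Y) = dY →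
        ∀ (f : X ≃ₜ Y), IsQuasisymmetric η f →
          ∀ x y : X, c * dist x y ^ Λ ≤ dist (f x) (f y) ∧
            dist (f x) (f y) ≤ C * dist x y ^ lam := by
  obtain ⟨ηi, hηsmono, hη0, hηnn, hleft, hright, hinn, hinvmono⟩ := eta_props η hη
  have hmonoX : MonotoneOn η (Ici 0) := hηsmono.monotoneOn
  have hηi_pos : ∀ s, 0 < s → 0 < ηi s := by
    intro s hs
    rcases eq_or_lt_of_le (hinn s hs.le) with h | h
    · exfalso
      have h2 := hright s hs.le
      rw [← h, hη0] at h2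
      linarith
    · exact h
  -- an m for η
  have hmXex : ∃ m : ℕ, 1 ≤ m ∧ η ((1/2:ℝ)^m) ≤ 1/2 := by
    have h2 : 0 < ηi (1/2) := hηi_pos _ (by norm_num)
    obtain ⟨k, hk⟩ := exists_pow_lt_of_lt_one h2 (by norm_num : (1/2 : ℝ) < 1)
    refine ⟨k + 1, Nat.succ_le_succ (Nat.zero_le k), ?_⟩
    have hle : ((1:ℝ)/2)^(k+1) ≤ ηi (1/2) := by
      have h := pow_le_pow_of_le_one (by norm_num : (0:ℝ) ≤ 1/2) (by norm_num) (Nat.le_succ k)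
      simp only [Nat.succ_eq_add_one] at h
      linarith
    have h3 := hmonoX (mem_Ici.mpr (by positivity)) (mem_Ici.mpr (hinn _ (by norm_num))) hle
    rwa [hright (1/2) (by norm_num)] at h3
  obtain ⟨mX, hmX1, hmX2⟩ := hmXex
  obtain ⟨lamX, CX, hlamX, hlamX1, hCX, HX⟩ := lemA η hmonoX mX hmX1 hmX2 D dX dY hD hdX hdY
  -- the control function for the inverse map
  set θ' : ℝ → ℝ := fun t => if 0 < t then 1 / ηi (1/t) else 0 with hθ'_def
  have hmono' : MonotoneOn θ' (Ici 0) := by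
    intro a ha b hb hab
    by_cases ha0 : 0 < a
    · have hb0 : 0 < b := lt_of_lt_of_le ha0 hab
      simp only [hθ'_def, if_pos ha0, if_pos hb0]
      have h1 : 1/b ≤ 1/a := one_div_le_one_div_of_le ha0 hab
      have h2 : ηi (1/b) ≤ ηi (1/a) :=
        hinvmono (mem_Ici.mpr (by positivity)) (mem_Ici.mpr (by positivity)) h1
      exact one_div_le_one_div_of_le (hηi_pos (1/b) (by positivity)) h2
    · simp only [hθ'_def, if_neg ha0]
      by_cases hb0 : 0 < b
      · simp only [if_pos hb0]
        exact one_div_nonneg.mpr (hinn _ (by positivity))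
      · simp only [if_neg hb0]
        exact le_rfl
  have hmYex : ∃ m : ℕ, 1 ≤ m ∧ θ' ((1/2:ℝ)^m) ≤ 1/2 := by
    obtain ⟨k, hk⟩ := pow_unbounded_of_one_lt (η 2) (by norm_num : (1:ℝ) < 2)
    refine ⟨k + 1, Nat.succ_le_succ (Nat.zero_le k), ?_⟩
    have hpos : (0:ℝ) < (1/2:ℝ)^(k+1) := by positivity
    simp only [hθ'_def, if_pos hpos]
    have hinv : (1:ℝ) / ((1/2:ℝ)^(k+1)) = 2^(k+1) := by
      rw [one_div, ← inv_pow]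
      norm_num
    rw [hinv]
    have h1 : η 2 ≤ (2:ℝ)^(k+1) :=
      le_of_lt (lt_of_lt_of_le hk (pow_le_pow_right₀ (by norm_num) (Nat.le_succ k)))
    have h3 : ηi (η 2) ≤ ηi ((2:ℝ)^(k+1)) :=
      hinvmono (mem_Ici.mpr (hηnn 2 (by norm_num))) (mem_Ici.mpr (by positivity)) h1
    rw [hleft 2 (by norm_num)] at h3
    exact one_div_le_one_div_of_le (by norm_num) h3
  obtain ⟨mY, hmY1, hmY2⟩ := hmYex
  obtain ⟨lamY, CY, hlamY, hlamY1, hCY, HY⟩ := lemA θ' hmono' mY hmY1 hmY2 D dY dX hD hdY hdX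
  set Λ := 1 / lamY with hΛ_def
  have hΛ1 : 1 ≤ Λ := by
    rw [hΛ_def, le_div_iff₀ hlamY, one_mul]
    exact hlamY1
  set c0 : ℝ := (1 / CY) ^ Λ with hc0_def
  have hc0 : 0 < c0 := Real.rpow_pos_of_pos (by positivity) Λ
  refine ⟨Λ, lamX, max CX c0, min c0 CX, hlamX, le_trans hlamX1 hΛ1,
    lt_min hc0 hCX, le_trans (min_le_right _ _) (le_max_left _ _), ?_⟩
  intro X Y _ _ _ _ hbX hbY hupX hupY hdiamX hdiamY f hf x y
  -- upper bound from lemA applied to f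
  have upper := HX X Y hbY hupX hdiamX hdiamY f f.injective
    (fun a b c h => hf a b c h) x y
  -- quasisymmetry of the inverse
  have hqs' : ∀ u v w : Y, u ≠ w →
      dist (f.symm u) (f.symm v) / dist (f.symm u) (f.symm w) ≤ θ' (dist u v / dist u w) := by
    intro u v w huw
    by_cases huv : u = v
    · subst huv
      simp [hθ'_def, dist_self, zero_div]
    · have hduw : 0 < dist u w := dist_pos.mpr huw
      have hduv : 0 < dist u v := dist_pos.mpr huv
      have hab : f.symm u ≠ f.symm v := fun h => huv (f.symm.injective h)
      have hac : f.symm u ≠ f.symm w := fun h => huw (f.symm.injective h)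
      have hqs2 := hf (f.symm u) (f.symm w) (f.symm v) hab
      rw [f.apply_symm_apply, f.apply_symm_apply, f.apply_symm_apply] at hqs2
      -- hqs2 : dist u w / dist u v ≤ η (dist (f.symm u) (f.symm w) / dist (f.symm u) (f.symm v))
      have hA : 0 < dist (f.symm u) (f.symm v) := dist_pos.mpr hab
      have hB : 0 < dist (f.symm u) (f.symm w) := dist_pos.mpr hac
      have h4 := hinvmono (mem_Ici.mpr (div_nonneg dist_nonneg dist_nonneg))
        (mem_Ici.mpr (hηnn _ (div_nonneg dist_nonneg dist_nonneg))) hqs2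
      rw [hleft _ (div_nonneg dist_nonneg dist_nonneg)] at h4
      -- h4 : ηi (dist u w / dist u v) ≤ dist (f.symm u) (f.symm w) / dist (f.symm u) (f.symm v)
      have hR : 0 < ηi (dist u w / dist u v) := hηi_pos _ (div_pos hduw hduv)
      have hratio : 0 < dist u v / dist u w := div_pos hduv hduw
      have hgoal : θ' (dist u v / dist u w) = 1 / ηi (dist u w / dist u v) := by
        rw [hθ'_def]
        simp only [if_pos hratio]
        rw [one_div_div]
      rw [hgoal, div_le_div_iff₀ hB hR]
      have h5 : ηi (dist u w / dist u v) * dist (f.symm u) (f.symm v) ≤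
          dist (f.symm u) (f.symm w) := (le_div_iff₀ hA).mp h4
      nlinarith [h5]
  -- lower bound from lemA applied to f.symm
  have lower' := HY Y X hbX hupY hdiamY hdiamX f.symm f.symm.injective hqs' (f x) (f y)
  rw [f.symm_apply_apply, f.symm_apply_apply] at lower'
  have hlow : c0 * dist x y ^ Λ ≤ dist (f x) (f y) := by
    have ha : (0:ℝ) ≤ dist x y := dist_nonneg
    have hb : (0:ℝ) ≤ dist (f x) (f y) := dist_nonneg
    have h1 : dist x y * (1/CY) ≤ dist (f x) (f y) ^ lamY := by
      rw [mul_one_div]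
      exact (div_le_iff₀ hCY).mpr (by linarith [lower'])
    have h2 : (dist x y * (1/CY)) ^ Λ ≤ (dist (f x) (f y) ^ lamY) ^ Λ :=
      Real.rpow_le_rpow (by positivity) h1 (by positivity)
    have h3 : (dist (f x) (f y) ^ lamY) ^ Λ = dist (f x) (f y) := by
      rw [← Real.rpow_mul hb, hΛ_def, mul_one_div, div_self hlamY.ne', Real.rpow_one]
    have h4 : (dist x y * (1/CY)) ^ Λ = dist x y ^ Λ * c0 := by
      rw [Real.mul_rpow ha (by positivity), hc0_def]
    rw [h3, h4] at h2
    nlinarith [h2]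
  constructor
  · exact le_trans (mul_le_mul_of_nonneg_right (min_le_left c0 CX)
      (Real.rpow_nonneg dist_nonneg Λ)) hlow
  · exact le_trans upper (mul_le_mul_of_nonneg_right (le_max_left CX c0)
      (Real.rpow_nonneg dist_nonneg lamX))
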